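/- arXiv:1606.06926 — 2 statements merged into one kernel-verified Lean document; each statement's English description precedes it below -/
import Mathlib

section
/- Let N be a positive integer, let a : ℤ → ℝ satisfy 0 ≤ a_ℓ ≤ 1 for all ℓ, a_ℓ = 1 for ℓ < L, and a_ℓ ≥ 1 - (1/(γN))·∑_{i=1}^{γN} a_{ℓ-i} for all ℓ ≥ L, where γN is a positive integer and √γ N is a positive integer with √γ N ≥ γN. Then the average (1/(√γ N))·∑_{ℓ=L}^{L+√γ N - 1} a_ℓ ≥ 1/2 - √γ/4 - 1/(4√γ N). -/
private lemma gauss_Icc_real (m : ℕ) :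
    ∑ i ∈ Finset.Icc 1 m, (i : ℝ) = (m : ℝ) * (m + 1) / 2 := by
  induction m with
  | zero => simp
  | succ n ih =>
    rw [Finset.sum_Icc_succ_top (by omega), ih]
    push_cast
    ring

/-- Averaging bound for the feasibility-probability recursion (Lemma 2 core):
if `a ℓ = 1` before round `L` and `a ℓ ≥ 1 - (1/(γN)) ∑_{i=1}^{γN} a_{ℓ-i}`
afterwards, then the average over the block of length `√γ N` is at least
`1/2 - √γ/4 - 1/(4 √γ N)`. -/
theorem average_feasibility_recursion
    (γ N : ℝ) (hγ0 : 0 < γ) (hγ1 : γ < 1) (hN : 0 < N)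
    (L : ℤ) (m s : ℕ) (hm : 0 < m) (hs : 0 < s)
    (hmN : (m : ℝ) = γ * N)
    (hsN : (s : ℝ) = Real.sqrt γ * N)
    (hms : m ≤ s)
    (a : ℤ → ℝ)
    (hbound : ∀ ℓ : ℤ, 0 ≤ a ℓ ∧ a ℓ ≤ 1)
    (hpre : ∀ ℓ : ℤ, ℓ < L → a ℓ = 1)
    (hrec : ∀ ℓ : ℤ, L ≤ ℓ →
      a ℓ ≥ 1 - (1 / (γ * N)) * ∑ i ∈ Finset.Icc 1 m, a (ℓ - (i : ℤ))) :
    (1 / (Real.sqrt γ * N)) * ∑ ℓ ∈ Finset.Ico L (L + (s : ℤ)), a ℓ ≥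
      1 / 2 - Real.sqrt γ / 4 - 1 / (4 * (Real.sqrt γ * N)) := by
  have hm0 : (0 : ℝ) < m := by exact_mod_cast hm
  have hs0 : (0 : ℝ) < s := by exact_mod_cast hs
  set S := ∑ ℓ ∈ Finset.Ico L (L + (s : ℤ)), a ℓ with hSdef
  set T := ∑ ℓ ∈ Finset.Ico L (L + (s : ℤ)), ∑ i ∈ Finset.Icc 1 m, a (ℓ - (i : ℤ))
    with hTdef
  -- Step A : S ≥ s - (1/m) * T
  have hA : (s : ℝ) - (1 / (m : ℝ)) * T ≤ S := by
    have h1 : ∀ ℓ ∈ Finset.Ico L (L + (s : ℤ)),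
        1 - (1 / (m : ℝ)) * ∑ i ∈ Finset.Icc 1 m, a (ℓ - (i : ℤ)) ≤ a ℓ := by
      intro ℓ hℓ
      have := hrec ℓ (Finset.mem_Ico.mp hℓ).1
      rw [hmN]
      exact this
    have h2 := Finset.sum_le_sum h1
    have h3 : ∑ ℓ ∈ Finset.Ico L (L + (s : ℤ)),
        (1 - (1 / (m : ℝ)) * ∑ i ∈ Finset.Icc 1 m, a (ℓ - (i : ℤ)))
        = (s : ℝ) - (1 / (m : ℝ)) * T := by
      rw [Finset.sum_sub_distrib, Finset.sum_const, ← Finset.mul_sum, Int.card_Ico]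
      simp
      exact Or.inl rfl
    rw [h3] at h2
    exact h2
  -- Step C : for each i ∈ [1, m], the shifted sum is ≤ i + S
  have hC : ∀ i ∈ Finset.Icc 1 m,
      ∑ ℓ ∈ Finset.Ico L (L + (s : ℤ)), a (ℓ - (i : ℤ)) ≤ (i : ℝ) + S := by
    intro i hi
    obtain ⟨hi1, him⟩ := Finset.mem_Icc.mp hi
    have his : (i : ℤ) ≤ (s : ℤ) := by exact_mod_cast le_trans him hms
    have hi1' : (1 : ℤ) ≤ (i : ℤ) := by exact_mod_cast hi1
    -- reindex by the shift j = ℓ - i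
    have hmap : (Finset.Ico (L - (i : ℤ)) (L + (s : ℤ) - (i : ℤ))).map
        (addRightEmbedding (i : ℤ)) = Finset.Ico L (L + (s : ℤ)) := by
      rw [Finset.map_add_right_Ico]
      congr 1 <;> ring
    have hre : ∑ ℓ ∈ Finset.Ico L (L + (s : ℤ)), a (ℓ - (i : ℤ))
        = ∑ j ∈ Finset.Ico (L - (i : ℤ)) (L + (s : ℤ) - (i : ℤ)), a j := by
      rw [← hmap, Finset.sum_map]
      simp [addRightEmbedding]
    rw [hre]
    have hsplit : ∑ j ∈ Finset.Ico (L - (i : ℤ)) L, a j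
        + ∑ j ∈ Finset.Ico L (L + (s : ℤ) - (i : ℤ)), a j
        = ∑ j ∈ Finset.Ico (L - (i : ℤ)) (L + (s : ℤ) - (i : ℤ)), a j := by
      have hab : L - (i : ℤ) ≤ L := by omega
      have hbc : L ≤ L + (s : ℤ) - (i : ℤ) := by omega
      rw [← Finset.Ico_union_Ico_eq_Ico hab hbc,
        Finset.sum_union (Finset.Ico_disjoint_Ico_consecutive _ _ _)]
    rw [← hsplit]
    have hone : ∑ j ∈ Finset.Ico (L - (i : ℤ)) L, a j = (i : ℝ) := by
      rw [Finset.sum_congr rfl (fun j hj => hpre j (Finset.mem_Ico.mp hj).2),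
        Finset.sum_const, Int.card_Ico]
      have h4 : (L - (L - (i : ℤ))).toNat = i := by omega
      rw [h4]
      simp
    have hsub : ∑ j ∈ Finset.Ico L (L + (s : ℤ) - (i : ℤ)), a j ≤ S := by
      apply Finset.sum_le_sum_of_subset_of_nonneg
      · exact Finset.Ico_subset_Ico le_rfl (by omega)
      · intro j _ _
        exact (hbound j).1
    linarith [hone, hsub]
  -- Step D : T ≤ m(m+1)/2 + m * S
  have hD : T ≤ (m : ℝ) * (m + 1) / 2 + (m : ℝ) * S := by
    rw [hTdef, Finset.sum_comm]
    calc ∑ i ∈ Finset.Icc 1 m, ∑ ℓ ∈ Finset.Ico L (L + (s : ℤ)), a (ℓ - (i : ℤ))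
        ≤ ∑ i ∈ Finset.Icc 1 m, ((i : ℝ) + S) := Finset.sum_le_sum hC
      _ = (∑ i ∈ Finset.Icc 1 m, (i : ℝ)) + (m : ℝ) * S := by
          rw [Finset.sum_add_distrib, Finset.sum_const, Nat.card_Icc]
          simp [nsmul_eq_mul]
      _ = (m : ℝ) * (m + 1) / 2 + (m : ℝ) * S := by rw [gauss_Icc_real]
  -- Step E : combine
  have hkey : (s : ℝ) / 2 - ((m : ℝ) + 1) / 4 ≤ S := by
    have h5 : (1 / (m : ℝ)) * T ≤ ((m : ℝ) + 1) / 2 + S := by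
      have := mul_le_mul_of_nonneg_left hD (le_of_lt (one_div_pos.mpr hm0))
      calc (1 / (m : ℝ)) * T ≤ (1 / (m : ℝ)) * ((m : ℝ) * (m + 1) / 2 + (m : ℝ) * S) := this
        _ = ((m : ℝ) + 1) / 2 + S := by field_simp
    linarith
  -- turn it into the averaged statement
  have hsq : Real.sqrt γ * Real.sqrt γ = γ := Real.mul_self_sqrt hγ0.le
  have hmγs : (m : ℝ) = Real.sqrt γ * s := by
    rw [hmN, hsN]; linear_combination -N * hsq
  rw [← hsN, ge_iff_le, ← sub_nonneg]
  have hid : 1 / (s : ℝ) * S - (1 / 2 - Real.sqrt γ / 4 - 1 / (4 * (s : ℝ)))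
      = (S - ((s : ℝ) / 2 - ((m : ℝ) + 1) / 4)) / s := by
    rw [hmγs]
    field_simp
    ring
  rw [hid]
  exact div_nonneg (by linarith) hs0.le
end

section
/- Let B, M be positive integers, (C̃_ℓ)_{ℓ} and (F_ℓ)_{ℓ} be sequences of real numbers indexed by integers, with C̃_ℓ ∈ {0,1}, F_ℓ ∈ {0,1}, and F̃_ℓ defined by F̃_ℓ = 1 for ℓ < L and F̃_ℓ = max{0, 1 - (1/B)∑_{i=1}^{M} C̃_{ℓ-i}·F̃_{ℓ-i}} for ℓ ≥ L. Suppose that for all ℓ ≥ L, if ∑_{i=1}^{M} C̃_{ℓ-i}·F_{ℓ-i} < B then F_ℓ = 1 (the feasibility rule). Then for all k ∈ ℤ: ∑_{ℓ=L}^{L+k} C̃_ℓ·F_ℓ ≥ ∑_{ℓ=L}^{L+k} C̃_ℓ·F̃_ℓ (where empty sums are 0 when k < 0). -/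
private lemma sum_Icc_split_aux (f : ℤ → ℝ) {a b c : ℤ} (hab : a ≤ b) (hbc : b ≤ c + 1) :
    ∑ j ∈ Finset.Icc a c, f j
      = ∑ j ∈ Finset.Icc a (b - 1), f j + ∑ j ∈ Finset.Icc b c, f j := by
  rw [← Finset.sum_union]
  · congr 1
    ext x
    simp only [Finset.mem_union, Finset.mem_Icc]
    omega
  · simp only [Finset.disjoint_left, Finset.mem_Icc, not_and, not_le]
    omega

private lemma reindex_window (g : ℤ → ℝ) (ℓ : ℤ) (M : ℕ) :
    ∑ i ∈ Finset.Icc 1 M, g (ℓ - (i : ℤ)) = ∑ j ∈ Finset.Icc (ℓ - M) (ℓ - 1), g j := by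
  refine Finset.sum_nbij' (i := fun i : ℕ => ℓ - (i : ℤ)) (j := fun j : ℤ => (ℓ - j).toNat)
    ?_ ?_ ?_ ?_ ?_
  · intro i hi; simp only [Finset.mem_Icc] at *; omega
  · intro j hj; simp only [Finset.mem_Icc] at *; omega
  · intro i hi; simp only [Finset.mem_Icc] at hi
    show (ℓ - (ℓ - (i:ℤ))).toNat = i; omega
  · intro j hj; simp only [Finset.mem_Icc] at hj
    show ℓ - ((ℓ - j).toNat : ℤ) = j; omega
  · intro i hi; rfl

/-- Pointwise coupling inequality from the proof of Lemma 2: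
`∑_{ℓ=L}^{L+k} C̃_ℓ F_ℓ ≥ ∑_{ℓ=L}^{L+k} C̃_ℓ F̃_ℓ` for all `k ∈ ℤ`. -/
theorem coupling_pointwise_domination
    (B M : ℕ) (hB : 0 < B) (hM : 0 < M) (L : ℤ)
    (C F Ftil : ℤ → ℝ)
    (hC : ∀ ℓ, C ℓ = 0 ∨ C ℓ = 1)
    (hF : ∀ ℓ, F ℓ = 0 ∨ F ℓ = 1)
    (hFpre : ∀ ℓ, ℓ < L → F ℓ = 1)
    (hFtpre : ∀ ℓ, ℓ < L → Ftil ℓ = 1)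
    (hFtrec : ∀ ℓ, L ≤ ℓ →
      Ftil ℓ = max 0 (1 - (1 / (B : ℝ)) *
        ∑ i ∈ Finset.Icc 1 M, C (ℓ - (i : ℤ)) * Ftil (ℓ - (i : ℤ))))
    (hfeas : ∀ ℓ, L ≤ ℓ →
      (∑ i ∈ Finset.Icc 1 M, C (ℓ - (i : ℤ)) * F (ℓ - (i : ℤ))) < (B : ℝ) →
      F ℓ = 1) :
    ∀ k : ℤ, ∑ ℓ ∈ Finset.Icc L (L + k), C ℓ * F ℓ ≥
      ∑ ℓ ∈ Finset.Icc L (L + k), C ℓ * Ftil ℓ := by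
  have hBpos : (0:ℝ) < B := by exact_mod_cast hB
  have hB1 : (1:ℝ) ≤ B := by exact_mod_cast hB
  have hM1 : (1:ℤ) ≤ (M:ℤ) := by exact_mod_cast hM
  have hC0 : ∀ j, 0 ≤ C j := fun j => by rcases hC j with h | h <;> rw [h] <;> norm_num
  have hC1 : ∀ j, C j ≤ 1 := fun j => by rcases hC j with h | h <;> rw [h] <;> norm_num
  have hFt0 : ∀ j, 0 ≤ Ftil j := by
    intro j
    rcases lt_or_ge j L with h | h
    · rw [hFtpre j h]; norm_num
    · rw [hFtrec j h]; exact le_max_left _ _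
  have hFt1 : ∀ j, Ftil j ≤ 1 := by
    intro j
    rcases lt_or_ge j L with h | h
    · rw [hFtpre j h]
    · rw [hFtrec j h]
      have hs : 0 ≤ ∑ i ∈ Finset.Icc 1 M, C (j - (i:ℤ)) * Ftil (j - (i:ℤ)) :=
        Finset.sum_nonneg fun i _ => mul_nonneg (hC0 _) (hFt0 _)
      have h2 : 0 ≤ (1/(B:ℝ)) * ∑ i ∈ Finset.Icc 1 M, C (j - (i:ℤ)) * Ftil (j - (i:ℤ)) :=
        mul_nonneg (by positivity) hs
      apply max_le (by norm_num)
      linarith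
  have hDpre : ∀ j, j < L → C j * F j - C j * Ftil j = 0 := by
    intro j h; rw [hFpre j h, hFtpre j h]; ring
  suffices key : ∀ n : ℕ, 0 ≤ ∑ j ∈ Finset.Icc L (L + (n:ℤ)),
      (C j * F j - C j * Ftil j) by
    intro k
    rcases lt_or_ge k 0 with hk | hk
    · rw [Finset.Icc_eq_empty (by omega)]
      simp
    · obtain ⟨n, rfl⟩ := Int.eq_ofNat_of_zero_le hk
      have h := key n
      rw [Finset.sum_sub_distrib] at h
      linarith
  intro n
  induction n using Nat.strong_induction_on with
  | _ n ih =>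
  have ihZ : ∀ m : ℤ, m < (n:ℤ) →
      0 ≤ ∑ j ∈ Finset.Icc L (L+m), (C j * F j - C j * Ftil j) := by
    intro m hm
    rcases lt_or_ge m 0 with h | h
    · rw [Finset.Icc_eq_empty (by omega)]; simp
    · obtain ⟨m', rfl⟩ := Int.eq_ofNat_of_zero_le h
      exact ih m' (by exact_mod_cast hm)
  set ℓ : ℤ := L + (n:ℤ) with hℓ
  have hLℓ : L ≤ ℓ := by omega
  have hsplit : ∑ j ∈ Finset.Icc L ℓ, (C j * F j - C j * Ftil j)
      = (∑ j ∈ Finset.Icc L (ℓ - 1), (C j * F j - C j * Ftil j))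
        + (C ℓ * F ℓ - C ℓ * Ftil ℓ) := by
    rw [sum_Icc_split_aux _ hLℓ (by omega)]
    simp [Finset.Icc_self]
  have hpre : 0 ≤ ∑ j ∈ Finset.Icc L (ℓ - 1), (C j * F j - C j * Ftil j) := by
    have h := ihZ ((n:ℤ) - 1) (by omega)
    have e : L + ((n:ℤ) - 1) = ℓ - 1 := by omega
    rwa [e] at h
  rw [hsplit]
  rcases hF ℓ with h0 | h1
  · -- F ℓ = 0 : feasibility forces the window sum of actual selections to be ≥ B
    set W := ∑ i ∈ Finset.Icc 1 M, C (ℓ - (i:ℤ)) * F (ℓ - (i:ℤ)) with hW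
    set Wt := ∑ i ∈ Finset.Icc 1 M, C (ℓ - (i:ℤ)) * Ftil (ℓ - (i:ℤ)) with hWt
    have hWB : (B:ℝ) ≤ W := by
      by_contra hc
      push_neg at hc
      have h := hfeas ℓ hLℓ hc
      rw [h0] at h; norm_num at h
    have hFtl : Ftil ℓ = max 0 (1 - (1/(B:ℝ)) * Wt) := hFtrec ℓ hLℓ
    have hwd : W - Wt = ∑ j ∈ Finset.Icc (ℓ - M) (ℓ - 1), (C j * F j - C j * Ftil j) := by
      rw [hW, hWt, ← Finset.sum_sub_distrib]
      exact reindex_window (fun j => C j * F j - C j * Ftil j) ℓ M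
    set m0 : ℤ := max L (ℓ - M) with hm0
    have hm0L : L ≤ m0 := le_max_left _ _
    have hm0ℓ : m0 ≤ ℓ := max_le hLℓ (by omega)
    have hwin : ∑ j ∈ Finset.Icc (ℓ - M) (ℓ - 1), (C j * F j - C j * Ftil j)
        = ∑ j ∈ Finset.Icc m0 (ℓ - 1), (C j * F j - C j * Ftil j) := by
      rcases le_or_gt L (ℓ - M) with h | h
      · rw [hm0, max_eq_right h]
      · rw [hm0, max_eq_left h.le]
        rw [sum_Icc_split_aux _ (a := ℓ - (M:ℤ)) (b := L) (c := ℓ - 1) h.le (by omega)]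
        have hz : ∑ j ∈ Finset.Icc (ℓ - (M:ℤ)) (L - 1), (C j * F j - C j * Ftil j) = 0 :=
          Finset.sum_eq_zero fun j hj => by
            have := Finset.mem_Icc.mp hj
            exact hDpre j (by omega)
        rw [hz, zero_add]
    have hwin2 : ∑ j ∈ Finset.Icc m0 (ℓ - 1), (C j * F j - C j * Ftil j)
        ≤ ∑ j ∈ Finset.Icc L (ℓ - 1), (C j * F j - C j * Ftil j) := by
      rw [sum_Icc_split_aux _ (a := L) (b := m0) (c := ℓ - 1) hm0L (by omega)]
      have h0' : 0 ≤ ∑ j ∈ Finset.Icc L (m0 - 1), (C j * F j - C j * Ftil j) := by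
        have h := ihZ (m0 - 1 - L) (by omega)
        have e : L + (m0 - 1 - L) = m0 - 1 := by omega
        rwa [e] at h
      linarith
    set G := ∑ j ∈ Finset.Icc L (ℓ - 1), (C j * F j - C j * Ftil j) with hG
    have hWWt : W - Wt ≤ G := by rw [hwd, hwin]; exact hwin2
    have hFtle : Ftil ℓ ≤ G := by
      rw [hFtl]
      apply max_le hpre
      have key2 : (B:ℝ) * (1 - (1/B)*Wt) ≤ B * G := by
        have e : (B:ℝ) * (1 - (1/B)*Wt) = B - Wt := by field_simp
        rw [e]
        nlinarith [mul_nonneg (sub_nonneg.mpr hB1) hpre]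
      exact le_of_mul_le_mul_left key2 hBpos
    have hCF : C ℓ * Ftil ℓ ≤ G :=
      le_trans (mul_le_of_le_one_left (hFt0 ℓ) (hC1 ℓ)) hFtle
    rw [h0]
    linarith
  · -- F ℓ = 1 : the new term is nonnegative
    rw [h1]
    nlinarith [hC0 ℓ, hC1 ℓ, hFt1 ℓ, hFt0 ℓ, hpre]
end
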